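/- There exists a constant m(μ) > 0, depending only on μ ∈ ℂ, such that for any triple (x,y,z) ∈ ℂ³ with x² + y² + z² - xyz = μ, all of x, y, z nonzero, and the vertex being a sink — i.e. |yz - x| ≤ |x|, |xz - y| ≤ |y|, and |xy - z| ≤ |z| — one has min{|x|, |y|, |z|} ≤ m(μ). -/

import Mathlib

lemma key_ineq (μ x y z : ℂ)
    (h : x ^ 2 + y ^ 2 + z ^ 2 - x * y * z = μ)
    (hz : ‖z‖ ≤ ‖x * y - z‖) :
    ‖x‖ * ‖y‖ * ‖z‖ ≤
      2 * ((‖x‖) ^ 2 + (‖y‖) ^ 2 + ‖μ‖) := by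
  have e : z * (x * y - z) = x ^ 2 + y ^ 2 - μ := by linear_combination -h
  have h1 : ‖x ^ 2 + y ^ 2 - μ‖ ≤ (‖x‖)^2 + (‖y‖)^2 + ‖μ‖ := by
    calc ‖x ^ 2 + y ^ 2 - μ‖ ≤ ‖x^2 + y^2‖ + ‖μ‖ := by
          simpa using norm_sub_le (x^2+y^2) μ
      _ ≤ ‖x^2‖ + ‖y^2‖ + ‖μ‖ := by
          have := norm_add_le (x^2) (y^2); linarith
      _ = (‖x‖)^2 + (‖y‖)^2 + ‖μ‖ := by
          simp [norm_pow]
  have h2 : (‖z‖)^2 ≤ ‖x ^ 2 + y ^ 2 - μ‖ := by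
    rw [← e, norm_mul]
    calc (‖z‖)^2 = ‖z‖ * ‖z‖ := sq (‖z‖) ▸ rfl
      _ ≤ ‖z‖ * ‖x*y - z‖ := by
          exact mul_le_mul_of_nonneg_left hz (norm_nonneg z)
  have h3 : ‖x‖ * ‖y‖ * ‖z‖ ≤
      ‖x ^ 2 + y ^ 2 - μ‖ + (‖z‖)^2 := by
    have : ‖z * (x*y)‖ ≤ ‖z*(x*y-z)‖ + ‖z*z‖ := by
      have : z * (x*y) = z*(x*y-z) + z*z := by ring
      rw [this]; exact norm_add_le _ _
    rw [e] at this
    simp only [norm_mul] at this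
    nlinarith [norm_nonneg z]
  linarith

lemma ordered_contra (K a b c : ℝ) (hK : 0 ≤ K)
    (ha : 2*K + 5 < a) (hab : a ≤ b) (hbc : b ≤ c)
    (h : a*b*c ≤ 2*(a^2+b^2+K)) : False := by
  have ha0 : (0:ℝ) < a := by linarith
  have hb0 : (0:ℝ) < b := by linarith
  have s1 : a*b*b ≤ a*b*c := by
    have := mul_le_mul_of_nonneg_left hbc (mul_pos ha0 hb0).le
    linarith [this]
  nlinarith [sq_nonneg (b - (2*K+5)), mul_pos hb0 hb0]

lemma real_contra (K a b c : ℝ) (hK : 0 ≤ K)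
    (ha : 2*K + 5 < a) (hb : 2*K + 5 < b) (hc : 2*K + 5 < c)
    (h1 : a*b*c ≤ 2*(b^2+c^2+K))
    (h2 : a*b*c ≤ 2*(a^2+c^2+K))
    (h3 : a*b*c ≤ 2*(a^2+b^2+K)) : False := by
  rcases le_total a b with hab | hab <;> rcases le_total b c with hbc | hbc <;>
    rcases le_total a c with hac | hac
  · exact ordered_contra K a b c hK ha hab hbc h3
  · exact ordered_contra K a b c hK ha hab hbc h3
  · exact ordered_contra K a c b hK ha hac hbc (by linarith [h2])
  · exact ordered_contra K c a b hK hc hac hab (by linarith [h2])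
  · exact ordered_contra K b a c hK hb hab hac (by linarith [h3])
  · exact ordered_contra K b c a hK hb hbc hac (by linarith [h1])
  · exact ordered_contra K c b a hK hc hbc hab (by linarith [h1])
  · exact ordered_contra K c b a hK hc hbc hab (by linarith [h1])

theorem sink_bound (μ : ℂ) :
    ∃ m : ℝ, 0 < m ∧ ∀ x y z : ℂ,
      x ≠ 0 → y ≠ 0 → z ≠ 0 →
      x ^ 2 + y ^ 2 + z ^ 2 - x * y * z = μ →
      ‖x‖ ≤ ‖y * z - x‖ →
      ‖y‖ ≤ ‖x * z - y‖ →
      ‖z‖ ≤ ‖x * y - z‖ →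
      min ‖x‖ (min ‖y‖ ‖z‖) ≤ m := by
  refine ⟨2 * ‖μ‖ + 5, by positivity, ?_⟩
  intro x y z hx hy hz heq h1 h2 h3
  by_contra hcon
  push_neg at hcon
  have ha : 2 * ‖μ‖ + 5 < ‖x‖ :=
    lt_of_lt_of_le hcon (min_le_left _ _)
  have hb : 2 * ‖μ‖ + 5 < ‖y‖ :=
    lt_of_lt_of_le hcon ((min_le_right _ _).trans (min_le_left _ _))
  have hc : 2 * ‖μ‖ + 5 < ‖z‖ :=
    lt_of_lt_of_le hcon ((min_le_right _ _).trans (min_le_right _ _))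
  have k3 := key_ineq μ x y z heq h3
  have k1 := key_ineq μ y z x (by linear_combination heq) h1
  have k2 := key_ineq μ x z y (by linear_combination heq) h2
  exact real_contra (‖μ‖) (‖x‖) (‖y‖) (‖z‖)
    (norm_nonneg μ) ha hb hc (by linarith [k1]) (by linarith [k2]) k3
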